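/- Let F be a field, V = F^{n+1}, let x ⊆ V be a subspace with dim x ≥ δ+1, and let δ ≤ k ≤ n. Let W ⊆ ⋀^{k+1} V be the subspace spanned by all vectors of the form u_0 ∧ ⋯ ∧ u_δ ∧ w_{δ+1} ∧ ⋯ ∧ w_k with u_0,…,u_δ ∈ x and w_{δ+1},…,w_k ∈ V. Then for linearly independent vectors v_0,…,v_k ∈ V, the totally decomposable vector v_0 ∧ ⋯ ∧ v_k lies in W if and only if dim(span{v_0,…,v_k} ∩ x) ≥ δ+1. Consequently, the nonzero totally decomposable vectors of W are exactly the Plücker vectors of the (k+1)-dimensional subspaces of V meeting x in a subspace of dimension at least δ+1, i.e., ℙ(W) ∩ 𝒱 is the Schubert variety Ω(F(x,δ,k)), where 𝒱 is the Plücker embedding of G_F(k+1,n+1). -/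

import Mathlib

open ExteriorAlgebra

/-- A product of `ι`-images split as an append equals `ιMulti` of a combined family. -/
private lemma prod_append_eq_iMulti
    {R M : Type*} [CommRing R] [AddCommGroup M] [Module R M]
    {a b c : ℕ} (h : a + b = c) (u : Fin a → M) (t : Fin b → M) (f : Fin c → M)
    (hf1 : ∀ (j : Fin c) (hj : (j : ℕ) < a), f j = u ⟨j, hj⟩)
    (hf2 : ∀ (j : Fin c) (hj : ¬ (j : ℕ) < a) (hj2 : (j : ℕ) - a < b), f j = t ⟨(j : ℕ) - a, hj2⟩) :
    ((List.ofFn fun i => ι R (u i)) ++ (List.ofFn fun i => ι R (t i))).prod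
      = ιMulti R c f := by
  rw [ιMulti_apply]
  congr 1
  apply List.ext_getElem
  · simp; omega
  · intro i h1 h2
    simp only [List.length_ofFn] at h2
    by_cases hia : i < a
    · rw [List.getElem_append_left (by simpa using hia)]
      simp only [List.getElem_ofFn]
      congr 1
      rw [hf1 ⟨i, h2⟩ hia]
    · rw [List.getElem_append_right (by simpa using hia)]
      simp only [List.getElem_ofFn, List.length_ofFn]
      congr 1
      rw [hf2 ⟨i, h2⟩ hia (by omega)]

/-- Any alternating map with index type matching a basis is determined by its value on the
basis, scaled by the determinant. -/
private lemma alt_map_eq_det_smul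
    {F M N : Type*} [Field F] [AddCommGroup M] [Module F M] [AddCommGroup N] [Module F N]
    {ι : Type*} [Fintype ι] [DecidableEq ι]
    (e : Module.Basis ι F M) (f : M [⋀^ι]→ₗ[F] N) (v : ι → M) :
    f v = e.det v • f e := by
  have hfg : f = (LinearMap.toSpanSingleton F N (f e)).compAlternatingMap e.det := by
    refine Module.Basis.ext_alternating e fun g hg => ?_
    have hb : Function.Bijective g := (Finite.injective_iff_bijective).1 hg
    let σ : Equiv.Perm ι := Equiv.ofBijective g hb
    have h1 : (fun i => e (g i)) = (⇑e ∘ σ) := rfl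
    rw [h1, AlternatingMap.map_perm, LinearMap.compAlternatingMap_apply,
      AlternatingMap.map_perm, Module.Basis.det_self, LinearMap.toSpanSingleton_apply]
    rcases Int.units_eq_one_or (Equiv.Perm.sign σ) with hs | hs <;> simp [hs]
  conv_lhs => rw [hfg]
  rw [LinearMap.compAlternatingMap_apply, LinearMap.toSpanSingleton_apply]

set_option maxHeartbeats 1600000 in
set_option synthInstance.maxHeartbeats 400000 in
open ExteriorAlgebra in
/-- Let `x ⊆ V = F^{n+1}` with `dim x ≥ δ+1`, `δ ≤ k ≤ n`, and let `W ⊆ ⋀^{k+1} V` be the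
span of all wedges `u₀ ∧ ⋯ ∧ u_δ ∧ w_{δ+1} ∧ ⋯ ∧ w_k` with `u_i ∈ x` and `w_j ∈ V`. Then
the wedge of `k+1` linearly independent vectors `v₀, …, v_k` lies in `W` iff
`dim(span{v₀,…,v_k} ∩ x) ≥ δ+1`; i.e. the nonzero totally decomposable vectors of `W` are
exactly the Plücker vectors of the Schubert variety `Ω(F(x,δ,k))`. -/
theorem schubert_variety_as_linear_section {F : Type*} [Field F]
    (n k δ : ℕ) (hδk : δ ≤ k) (hkn : k ≤ n)
    (x : Submodule F (Fin (n + 1) → F)) (hx : δ + 1 ≤ Module.finrank F x)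
    (W : Submodule F (ExteriorAlgebra F (Fin (n + 1) → F)))
    (hW : W = Submodule.span F {w : ExteriorAlgebra F (Fin (n + 1) → F) |
      ∃ (u : Fin (δ + 1) → (Fin (n + 1) → F)) (t : Fin (k - δ) → (Fin (n + 1) → F)),
        (∀ i, u i ∈ x) ∧
        w = ((List.ofFn fun i => ι F (u i)) ++ (List.ofFn fun i => ι F (t i))).prod}) :
    ∀ v : Fin (k + 1) → (Fin (n + 1) → F), LinearIndependent F v →
      ((List.ofFn fun i => ι F (v i)).prod ∈ W ↔
        δ + 1 ≤ Module.finrank F ↥(Submodule.span F (Set.range v) ⊓ x)) := by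
  classical
  intro v hv
  obtain ⟨U, hU⟩ : ∃ U : Submodule F (Fin (n + 1) → F),
      U = Submodule.span F (Set.range v) := ⟨_, rfl⟩
  rw [← hU]
  have hvU : ∀ i, v i ∈ U := fun i => by
    rw [hU]; exact Submodule.subset_span (Set.mem_range_self i)
  have hUrank : Module.finrank F ↥U = k + 1 := by
    rw [hU, finrank_span_eq_card hv, Fintype.card_fin]
  constructor
  · -- forward direction
    intro hmem
    by_contra hcon
    push_neg at hcon
    set d' := Module.finrank F ↥(U ⊓ x) with hd'
    have hd'le : d' ≤ δ := by omega
    -- basis of U ⊓ x and extended coordinate functionals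
    let b : Module.Basis (Fin d') F ↥(U ⊓ x) := Module.finBasis F _
    choose φ₁ hφ₁ using fun jd : Fin d' => LinearMap.exists_extend (b.coord jd)
    -- quotient by x
    set q := x.mkQ with hq
    obtain ⟨U', hU'⟩ : ∃ U' : Submodule F ((Fin (n + 1) → F) ⧸ x), U' = U.map q := ⟨_, rfl⟩
    have hU'rank : Module.finrank F ↥U' = (k + 1) - d' := by
      have h1 := LinearMap.finrank_range_add_finrank_ker (q ∘ₗ U.subtype)
      have h2 : LinearMap.range (q ∘ₗ U.subtype) = U' := by
        rw [hU', LinearMap.range_comp, Submodule.range_subtype]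
      have h3 : LinearMap.ker (q ∘ₗ U.subtype) = Submodule.comap U.subtype (U ⊓ x) := by
        rw [LinearMap.ker_comp, hq, Submodule.ker_mkQ]
        ext z
        simp [Submodule.mem_comap, z.2]
      have h4 : Module.finrank F ↥(Submodule.comap U.subtype (U ⊓ x)) = d' :=
        (Submodule.comapSubtypeEquivOfLe inf_le_left).finrank_eq
      rw [h2, h3, h4, hUrank] at h1
      omega
    let c : Module.Basis (Fin ((k + 1) - d')) F ↥U' := Module.finBasisOfFinrankEq F _ hU'rank
    choose ψ hψ using fun jm : Fin ((k + 1) - d') => LinearMap.exists_extend (c.coord jm)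
    -- the functionals
    let φ : Fin (k + 1) → ((Fin (n + 1) → F) →ₗ[F] F) := fun j =>
      if h : (j : ℕ) < d' then φ₁ ⟨j, h⟩
      else (ψ ⟨(j : ℕ) - d', by omega⟩) ∘ₗ q
    let L : (Fin (n + 1) → F) →ₗ[F] (Fin (k + 1) → F) := LinearMap.pi φ
    have hφx : ∀ (j : Fin (k + 1)) (z : Fin (n + 1) → F), z ∈ x → ¬ ((j : ℕ) < d') → φ j z = 0 := by
      intro j z hz hj
      simp only [φ, dif_neg hj, LinearMap.comp_apply]
      have hqz : q z = 0 := by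
        rw [hq, Submodule.mkQ_apply, Submodule.Quotient.mk_eq_zero]
        exact hz
      rw [hqz, map_zero]
    have hLinj : ∀ z, z ∈ U → L z = 0 → z = 0 := by
      intro z hzU hLz
      have hqmem : q z ∈ U' := by rw [hU']; exact Submodule.mem_map_of_mem hzU
      have hqz : q z = 0 := by
        have hco : ∀ jm : Fin ((k + 1) - d'), c.coord jm ⟨q z, hqmem⟩ = 0 := by
          intro jm
          have hj : (d' + (jm : ℕ)) < k + 1 := by omega
          have h1 : φ ⟨d' + jm, hj⟩ z = 0 := by
            have := congrFun hLz ⟨d' + jm, hj⟩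
            simpa [L, LinearMap.pi_apply] using this
          have h2 : φ ⟨d' + jm, hj⟩ z = ψ jm (q z) := by
            simp only [φ, dif_neg (by omega : ¬ (d' + (jm : ℕ) < d')), LinearMap.comp_apply]
            congr 2
            ext
            simp
          rw [← hψ jm]
          show ψ jm (q z) = 0
          rw [← h2, h1]
        have : (⟨q z, hqmem⟩ : ↥U') = 0 := c.forall_coord_eq_zero_iff.mp hco
        simpa using congrArg Subtype.val this
      have hzx : z ∈ x := by
        rw [hq, Submodule.mkQ_apply, Submodule.Quotient.mk_eq_zero] at hqz
        exact hqz
      have hzmem : z ∈ U ⊓ x := ⟨hzU, hzx⟩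
      have hco : ∀ jd : Fin d', b.coord jd ⟨z, hzmem⟩ = 0 := by
        intro jd
        have hj : (jd : ℕ) < k + 1 := by omega
        have h1 : φ ⟨jd, hj⟩ z = 0 := by
          have := congrFun hLz ⟨jd, hj⟩
          simpa [L, LinearMap.pi_apply] using this
        have h2 : φ ⟨jd, hj⟩ z = φ₁ jd z := by
          simp only [φ, dif_pos (jd.2 : ((⟨jd, hj⟩ : Fin (k+1)) : ℕ) < d')]
        rw [← hφ₁ jd]
        show φ₁ jd z = 0
        rw [← h2, h1]
      have : (⟨z, hzmem⟩ : ↥(U ⊓ x)) = 0 := b.forall_coord_eq_zero_iff.mp hco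
      simpa using congrArg Subtype.val this
    -- the alternating form and lift
    let A : (Fin (n + 1) → F) [⋀^Fin (k + 1)]→ₗ[F] F := Matrix.detRowAlternating.compLinearMap L
    let f0 : ∀ i, (Fin (n + 1) → F) [⋀^Fin i]→ₗ[F] F :=
      Function.update (fun _ => 0) (k + 1) A
    have hW_ker : W ≤ LinearMap.ker (liftAlternating f0) := by
      rw [hW]
      apply Submodule.span_le.2
      rintro w ⟨u, t, hux, rfl⟩
      have hsum : (δ + 1) + (k - δ) = k + 1 := by omega
      set cf : Fin (k + 1) → (Fin (n + 1) → F) := fun j =>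
        if h : (j : ℕ) < δ + 1 then u ⟨j, h⟩ else t ⟨(j : ℕ) - (δ + 1), by omega⟩ with hcf
      have hprod := prod_append_eq_iMulti (R := F) hsum u t cf
        (fun j hj => by simp [hcf, dif_pos hj, Nat.le_of_lt_succ hj])
        (fun j hj hj2 => by simp only [hcf, dif_neg hj])
      rw [SetLike.mem_coe, LinearMap.mem_ker, hprod, liftAlternating_apply_ιMulti]
      have hf0 : f0 (k + 1) = A := Function.update_self _ _ _
      rw [hf0]
      -- A cf is the determinant of a matrix whose first δ+1 rows are dependent
      have hnotli : ¬ LinearIndependent F (fun i : Fin (k + 1) => L (cf i)) := by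
        intro hli
        have hli2 : LinearIndependent F (fun i : Fin (δ + 1) => L (u i)) := by
          have h := hli.comp (Fin.castLE (by omega : δ + 1 ≤ k + 1))
            (Fin.castLE_injective _)
          convert h using 1
          funext i
          have : cf (Fin.castLE (by omega) i) = u i := by
            simp [hcf, dif_pos i.2, Nat.le_of_lt_succ i.2]
          simp [Function.comp, this]
        -- the rows live in a subspace of dimension ≤ d'
        let E : (Fin d' → F) →ₗ[F] (Fin (k + 1) → F) :=
          { toFun := fun w j => if h : (j : ℕ) < d' then w ⟨j, h⟩ else 0
            map_add' := by
              intro a b'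
              funext j
              by_cases h : (j : ℕ) < d' <;> simp [h]
            map_smul' := by
              intro m a
              funext j
              by_cases h : (j : ℕ) < d' <;> simp [h] }
        obtain ⟨S, hS⟩ : ∃ S : Submodule F (Fin (k + 1) → F), S = LinearMap.range E := ⟨_, rfl⟩
        have hSrank : Module.finrank F ↥S ≤ d' := by
          rw [hS]
          refine le_trans (LinearMap.finrank_range_le E) ?_
          simp [Module.finrank_pi]
        have hmemS : ∀ i : Fin (δ + 1), L (u i) ∈ S := by
          intro i
          rw [hS]
          refine ⟨fun jd => L (u i) (Fin.castLE (by omega) jd), ?_⟩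
          funext j
          by_cases h : (j : ℕ) < d'
          · simp only [E, LinearMap.coe_mk, AddHom.coe_mk, dif_pos h]
            exact congrArg (L (u i)) (Fin.ext rfl)
          · simp only [E, LinearMap.coe_mk, AddHom.coe_mk, dif_neg h]
            have : L (u i) j = φ j (u i) := by simp [L, LinearMap.pi_apply]
            rw [this, hφx j (u i) (hux i) h]
        let famS : Fin (δ + 1) → ↥S := fun i => ⟨L (u i), hmemS i⟩
        have hfamS : LinearIndependent F famS := by
          apply LinearIndependent.of_comp S.subtype
          exact hli2
        have hcard := hfamS.fintype_card_le_finrank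
        simp only [Fintype.card_fin] at hcard
        omega
      have hdet : (Matrix.of fun i => L (cf i)).det = 0 := by
        by_contra hne
        apply hnotli
        have hunit : IsUnit (Matrix.of fun i => L (cf i)) :=
          (Matrix.isUnit_iff_isUnit_det _).2 (isUnit_iff_ne_zero.2 hne)
        exact Matrix.linearIndependent_rows_iff_isUnit.2 hunit
      exact hdet
    have hzero : liftAlternating f0 ((List.ofFn fun i => ι F (v i)).prod) = 0 := hW_ker hmem
    rw [← ιMulti_apply, liftAlternating_apply_ιMulti] at hzero
    have hf0 : f0 (k + 1) = A := Function.update_self _ _ _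
    rw [hf0] at hzero
    -- but A v ≠ 0 since the rows L (v i) are linearly independent
    have hli : LinearIndependent F (fun i : Fin (k + 1) => L (v i)) := by
      rw [Fintype.linearIndependent_iff]
      intro g hg
      have hLz : L (∑ i, g i • v i) = 0 := by
        rw [map_sum]
        simpa [map_smul] using hg
      have hzmem : (∑ i, g i • v i) ∈ U :=
        Submodule.sum_mem _ fun i _ => Submodule.smul_mem _ _ (hvU i)
      have hz : (∑ i, g i • v i) = 0 := hLinj _ hzmem hLz
      exact Fintype.linearIndependent_iff.1 hv g hz
    have hdetv : (Matrix.of fun i => L (v i)).det ≠ 0 := by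
      have hunit := Matrix.linearIndependent_rows_iff_isUnit.1 hli
      have := (Matrix.isUnit_iff_isUnit_det _).1 hunit
      exact IsUnit.ne_zero this
    exact hdetv hzero
  · -- backward direction
    intro hd
    let b : Module.Basis (Fin (Module.finrank F ↥(U ⊓ x))) F ↥(U ⊓ x) := Module.finBasis F _
    let u : Fin (δ + 1) → (Fin (n + 1) → F) := fun i => ((b (Fin.castLE hd i) : ↥(U ⊓ x)) : Fin (n + 1) → F)
    have hu_mem : ∀ i, u i ∈ U ⊓ x := fun i => (b (Fin.castLE hd i)).2
    have hu_li : LinearIndependent F u := by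
      have h1 : LinearIndependent F (fun i : Fin (δ + 1) => b (Fin.castLE hd i)) :=
        b.linearIndependent.comp _ (Fin.castLE_injective hd)
      exact h1.map' (U ⊓ x).subtype (Submodule.ker_subtype _)
    obtain ⟨P, hP⟩ : ∃ P : Submodule F (Fin (n + 1) → F),
        P = Submodule.span F (Set.range u) := ⟨_, rfl⟩
    have hPle : P ≤ U := by
      rw [hP]
      refine Submodule.span_le.2 ?_
      rintro _ ⟨i, rfl⟩
      exact (hu_mem i).1
    have hPrank : Module.finrank F ↥P = δ + 1 := by
      rw [hP, finrank_span_eq_card hu_li, Fintype.card_fin]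
    obtain ⟨C', hC'⟩ := Submodule.exists_isCompl P
    obtain ⟨C, hCdef⟩ : ∃ C : Submodule F (Fin (n + 1) → F), C = C' ⊓ U := ⟨_, rfl⟩
    have hdisj : Disjoint P C := by
      rw [hCdef]
      exact hC'.disjoint.mono_right inf_le_left
    have hsup : P ⊔ C = U := by
      rw [hCdef, ← sup_inf_assoc_of_le _ hPle, hC'.codisjoint.eq_top, top_inf_eq]
    have hCrank : Module.finrank F ↥C = k - δ := by
      have h1 := Submodule.finrank_sup_add_finrank_inf_eq P C
      rw [hsup, hdisj.eq_bot, finrank_bot, hPrank, hUrank] at h1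
      omega
    let c : Module.Basis (Fin (k - δ)) F ↥C := Module.finBasisOfFinrankEq F _ hCrank
    let t : Fin (k - δ) → (Fin (n + 1) → F) := fun i => ((c i : ↥C) : Fin (n + 1) → F)
    have ht_li : LinearIndependent F t :=
      c.linearIndependent.map' C.subtype (Submodule.ker_subtype _)
    have hspanT : Submodule.span F (Set.range t) = C := by
      have h1 : Set.range t = C.subtype '' Set.range c := by
        rw [← Set.range_comp]; rfl
      rw [h1, Submodule.span_image, Module.Basis.span_eq, Submodule.map_subtype_top]
    have hsum_li : LinearIndependent F (Sum.elim u t) := by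
      refine hu_li.sum_type ht_li ?_
      rw [hspanT, ← hP]
      exact hdisj
    let σ : Fin (k + 1) → (Fin (δ + 1) ⊕ Fin (k - δ)) := fun j =>
      if h : (j : ℕ) < δ + 1 then Sum.inl ⟨j, h⟩ else Sum.inr ⟨(j : ℕ) - (δ + 1), by omega⟩
    have hσinj : Function.Injective σ := by
      intro a b' hab
      by_cases ha : (a : ℕ) < δ + 1 <;> by_cases hb : (b' : ℕ) < δ + 1 <;>
        simp only [σ, dif_pos, dif_neg, ha, hb] at hab <;>
        first
          | (apply Fin.ext
             have := congrArg (fun s => Sum.elim (fun p : Fin (δ+1) => (p : ℕ))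
               (fun p : Fin (k-δ) => (p : ℕ) + (δ+1)) s) hab
             simp at this
             omega)
          | (exfalso; exact Sum.noConfusion hab)
    have hσsurj : Function.Surjective σ := by
      rintro (i | i)
      · exact ⟨⟨i, by omega⟩, by simp [σ, dif_pos i.2, Nat.le_of_lt_succ i.2]⟩
      · refine ⟨⟨δ + 1 + i, by omega⟩, ?_⟩
        simp only [σ, dif_neg (by omega : ¬ (δ + 1 + (i : ℕ) < δ + 1))]
        congr 1
        apply Fin.ext
        simp
    let w : Fin (k + 1) → (Fin (n + 1) → F) := Sum.elim u t ∘ σ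
    have hw_li : LinearIndependent F w := hsum_li.comp σ hσinj
    have hw_span : Submodule.span F (Set.range w) = U := by
      have h1 : Set.range w = Set.range (Sum.elim u t) :=
        Function.Surjective.range_comp hσsurj _
      rw [h1, Set.Sum.elim_range, Submodule.span_union, ← hP, hspanT, hsup]
    have hwU_mem : ∀ j, w j ∈ U := fun j => by
      rw [← hw_span]
      exact Submodule.subset_span (Set.mem_range_self j)
    let wU : Fin (k + 1) → ↥U := fun j => ⟨w j, hwU_mem j⟩
    have hwU_li : LinearIndependent F wU := by
      apply LinearIndependent.of_comp U.subtype
      exact hw_li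
    have hwU_span : ⊤ ≤ Submodule.span F (Set.range wU) := by
      have hmap : Submodule.map U.subtype (Submodule.span F (Set.range wU))
          = Submodule.map U.subtype (⊤ : Submodule F ↥U) := by
        rw [Submodule.map_span, Submodule.map_subtype_top,
          show U.subtype '' Set.range wU = Set.range w from by rw [← Set.range_comp]; rfl,
          hw_span]
      exact (Submodule.map_injective_of_injective U.injective_subtype hmap).ge
    let Bw : Module.Basis (Fin (k + 1)) F ↥U := Module.Basis.mk hwU_li hwU_span
    let f : (↥U) [⋀^Fin (k + 1)]→ₗ[F] ExteriorAlgebra F (Fin (n + 1) → F) :=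
      (ιMulti F (k + 1)).compLinearMap U.subtype
    let vU : Fin (k + 1) → ↥U := fun i => ⟨v i, hvU i⟩
    have key := alt_map_eq_det_smul Bw f vU
    -- f applied to the basis is a generator of W
    have hfBw : f ⇑Bw = ((List.ofFn fun i => ι F (u i)) ++ (List.ofFn fun i => ι F (t i))).prod := by
      have hBw : ⇑Bw = wU := Module.Basis.coe_mk _ _
      rw [hBw]
      have happ : f wU = ιMulti F (k + 1) (fun i => ((wU i : ↥U) : Fin (n + 1) → F)) := rfl
      rw [happ]
      refine (prod_append_eq_iMulti (by omega) u t _ ?_ ?_).symm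
      · intro j hj
        simp only [wU, w, Function.comp, σ, dif_pos hj, Sum.elim_inl]
      · intro j hj hj2
        simp only [wU, w, Function.comp, σ, dif_neg hj, Sum.elim_inr]
    have hgen : f ⇑Bw ∈ W := by
      rw [hW, hfBw]
      exact Submodule.subset_span ⟨u, t, fun i => (hu_mem i).2, rfl⟩
    have hfvU : f vU = (List.ofFn fun i => ι F (v i)).prod := by
      have happ : f vU = ιMulti F (k + 1) (fun i => ((vU i : ↥U) : Fin (n + 1) → F)) := rfl
      rw [happ, ιMulti_apply]
    rw [← hfvU, key]
    exact Submodule.smul_mem _ _ hgen
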